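/- Let A, B be positive operators and X a bounded operator on H. The block operator [[A, X],[X*, B]] is positive if and only if |⟨x, Xy⟩|² ≤ ⟨x, Ax⟩·⟨y, By⟩ for all x, y ∈ H. -/

import Mathlib

open ContinuousLinearMap

variable {H : Type*} [NormedAddCommGroup H] [InnerProductSpace ℂ H] [CompleteSpace H]

/-- The 2×2 block operator `[[A, X],[Y, B]]` acting on the Hilbert space `H ⊕ H`
(realized as `WithLp 2 (H × H)`). -/
noncomputable def blockOperator (A X Y B : H →L[ℂ] H) :
    WithLp 2 (H × H) →L[ℂ] WithLp 2 (H × H) :=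
  (WithLp.prodContinuousLinearEquiv 2 ℂ H H).symm.toContinuousLinearMap ∘L
    ((A ∘L ContinuousLinearMap.fst ℂ H H + X ∘L ContinuousLinearMap.snd ℂ H H).prod
      (Y ∘L ContinuousLinearMap.fst ℂ H H + B ∘L ContinuousLinearMap.snd ℂ H H)) ∘L
    (WithLp.prodContinuousLinearEquiv 2 ℂ H H).toContinuousLinearMap

open ComplexConjugate in
/-- A scalar discriminant lemma. -/
lemma quad_aux_cs (α β c : ℂ) (hα : 0 ≤ α.re) (hβ : 0 ≤ β.re)
    (h : ∀ t : ℂ, 0 ≤ (conj t * t * α + t * conj c + conj t * c + β).re) :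
    ‖c‖ ^ 2 ≤ α.re * β.re := by
  by_cases hc : c = 0
  · simpa [hc] using mul_nonneg hα hβ
  · set d : ℝ := ‖c‖ ^ 2 with hd
    have hdpos : 0 < d := pow_pos (norm_pos_iff.mpr hc) 2
    have h1 : conj c * c = ((d : ℝ) : ℂ) := by
      rw [← Complex.normSq_eq_conj_mul_self, hd]
      norm_cast
      exact Complex.normSq_eq_norm_sq c
    have key : ∀ s : ℝ, 0 ≤ s ^ 2 * d * α.re - 2 * s * d + β.re := by
      intro s
      have ht := h ((s : ℂ) * (-c))
      have e : conj ((s : ℂ) * (-c)) * ((s : ℂ) * (-c)) * α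
          + ((s : ℂ) * (-c)) * conj c + conj ((s : ℂ) * (-c)) * c + β
          = ((s ^ 2 * d : ℝ) : ℂ) * α + ((-(2 * s * d) : ℝ) : ℂ) + β := by
        simp only [map_mul, Complex.conj_ofReal, map_neg]
        push_cast
        linear_combination ((s : ℂ) ^ 2 * α - 2 * (s : ℂ)) * h1
      rw [e] at ht
      simp only [Complex.add_re, Complex.ofReal_re, Complex.re_ofReal_mul] at ht
      linarith
    rcases eq_or_lt_of_le hα with hα0 | hαpos
    · exfalso
      have hk := key ((β.re + 1) / (2 * d))
      rw [← hα0] at hk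
      have h2 : 2 * ((β.re + 1) / (2 * d)) * d = β.re + 1 := by field_simp
      nlinarith
    · have h2 := key (1 / α.re)
      have e1 : (1 / α.re) ^ 2 * d * α.re = d / α.re := by field_simp
      have e2 : 2 * (1 / α.re) * d = 2 * (d / α.re) := by ring
      rw [e1, e2] at h2
      have h3 : d / α.re ≤ β.re := by linarith
      calc ‖c‖ ^ 2 = d := rfl
        _ ≤ α.re * β.re := by
            have := (div_le_iff₀ hαpos).mp h3
            linarith

lemma block_inner_cs (A X Y B : H →L[ℂ] H) (p : WithLp 2 (H × H)) :
    (inner ℂ (blockOperator A X Y B p) p : ℂ) =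
      inner ℂ (A p.fst) p.fst + inner ℂ (X p.snd) p.fst
        + inner ℂ (Y p.fst) p.snd + inner ℂ (B p.snd) p.snd := by
  have h1 : (blockOperator A X Y B p).fst = A p.fst + X p.snd := rfl
  have h2 : (blockOperator A X Y B p).snd = Y p.fst + B p.snd := rfl
  rw [WithLp.prod_inner_apply, WithLp.ofLp_fst, WithLp.ofLp_snd, h1, h2, inner_add_left, inner_add_left, WithLp.ofLp_fst, WithLp.ofLp_snd]
  ring

open ComplexConjugate in
/-- A generalized Cauchy–Schwarz inequality: for positive `A, B`,
`[[A, X],[X*, B]] ≥ 0` iff `|⟨x, X y⟩|² ≤ ⟨x, A x⟩ ⟨y, B y⟩` for all `x, y`. -/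
theorem blockOperator_isPositive_iff_cauchy_schwarz
    (A B X : H →L[ℂ] H) (hA : A.IsPositive) (hB : B.IsPositive) :
    (blockOperator A X (adjoint X) B).IsPositive ↔
      ∀ x y : H, ‖(inner ℂ x (X y) : ℂ)‖ ^ 2 ≤
        (inner ℂ x (A x) : ℂ).re * (inner ℂ y (B y) : ℂ).re := by
  rw [isPositive_iff_complex]
  constructor
  · intro hT x y
    have hq : ∀ t : ℂ, 0 ≤ (conj t * t * (inner ℂ (A x) x : ℂ)
        + t * conj (inner ℂ x (X y) : ℂ) + conj t * (inner ℂ x (X y) : ℂ)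
        + (inner ℂ (B y) y : ℂ)).re := by
      intro t
      have hp := (hT ((WithLp.equiv 2 (H × H)).symm (t • x, y))).2
      rw [block_inner_cs] at hp
      simp only [WithLp.equiv_symm_apply, WithLp.toLp_fst, WithLp.toLp_snd, map_smul,
        inner_smul_left, inner_smul_right, adjoint_inner_left] at hp
      have e : (inner ℂ (X y) x : ℂ) = conj (inner ℂ x (X y) : ℂ) := by
        rw [← inner_conj_symm]
      rw [e] at hp
      convert hp using 2
      ring
      rfl
    have := quad_aux_cs (inner ℂ (A x) x) (inner ℂ (B y) y) (inner ℂ x (X y))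
      (hA.re_inner_nonneg_left x) (hB.re_inner_nonneg_left y) hq
    have ea : ((inner ℂ (A x) x : ℂ)).re = ((inner ℂ x (A x) : ℂ)).re := by
      simpa using inner_re_symm (𝕜 := ℂ) (A x) x
    have eb : ((inner ℂ (B y) y : ℂ)).re = ((inner ℂ y (B y) : ℂ)).re := by
      simpa using inner_re_symm (𝕜 := ℂ) (B y) y
    rw [ea, eb] at this
    exact this
  · intro h p
    set x := p.fst with hx
    set y := p.snd with hy
    have e := block_inner_cs A X (adjoint X) B p
    rw [adjoint_inner_left] at e
    have e2 : (inner ℂ (X y) x : ℂ) = conj (inner ℂ x (X y) : ℂ) := by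
      rw [← inner_conj_symm]
    rw [e2] at e
    have hAre : ((inner ℂ (A x) x : ℂ)).im = 0 := by
      have := ((isPositive_iff_complex A).mp hA x).1
      rw [← this]
      simp
    have hBre : ((inner ℂ (B y) y : ℂ)).im = 0 := by
      have := ((isPositive_iff_complex B).mp hB y).1
      rw [← this]
      simp
    set c : ℂ := inner ℂ x (X y) with hc
    have hre : (inner ℂ (blockOperator A X (adjoint X) B p) p : ℂ).re
        = (inner ℂ (A x) x : ℂ).re + 2 * c.re + (inner ℂ (B y) y : ℂ).re := by
      rw [e]; simp [Complex.add_re, Complex.conj_re]; ring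
    have him : (inner ℂ (blockOperator A X (adjoint X) B p) p : ℂ).im = 0 := by
      rw [e]; simp [Complex.add_im, Complex.conj_im, hAre, hBre]; simpa using congrArg₂ (· + ·) hAre hBre
    constructor
    · refine Complex.ext (by simp) ?_
      simp only [Complex.ofReal_im]
      exact him.symm
    · show (0:ℝ) ≤ (inner ℂ (blockOperator A X (adjoint X) B p) p : ℂ).re
      rw [hre]
      have hcs := h x y
      have ea : ((inner ℂ x (A x) : ℂ)).re = ((inner ℂ (A x) x : ℂ)).re := by
        simpa using inner_re_symm (𝕜 := ℂ) x (A x)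
      have eb : ((inner ℂ y (B y) : ℂ)).re = ((inner ℂ (B y) y : ℂ)).re := by
        simpa using inner_re_symm (𝕜 := ℂ) y (B y)
      rw [ea, eb] at hcs
      have ha : (0:ℝ) ≤ ((inner ℂ (A x) x : ℂ)).re := hA.re_inner_nonneg_left x
      have hb : (0:ℝ) ≤ ((inner ℂ (B y) y : ℂ)).re := hB.re_inner_nonneg_left y
      rw [← hc] at hcs
      have h1 : |c.re| ≤ ‖c‖ := Complex.abs_re_le_norm c
      have h2 : 2 * ‖c‖ ≤ (inner ℂ (A x) x : ℂ).re + (inner ℂ (B y) y : ℂ).re := by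
        nlinarith [norm_nonneg c, hcs, ha, hb,
          sq_nonneg ((inner ℂ (A x) x : ℂ).re - (inner ℂ (B y) y : ℂ).re)]
      have h3 := abs_le.mp h1
      linarith [h3.1, h3.2]
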